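/- Let g be a 2-step nilpotent Lie algebra with abelian complex structure and complex one-dimensional center c^{1,0} spanned by W. Define ∂̄ on g^{1,0} by ∂̄_{B̄} A = [B̄, A]^{1,0}, extend to the exterior algebra f generated by g^{*(0,1)} ⊕ g^{1,0} as an anti-derivation together with the ∂̄-operator on (0,q)-forms. Then ∂̄ ∘ ∂̄ = 0 on all of f; in particular ∂̄² Ξ = 0 for every polyvector Ξ ∈ g^{p,0}. -/

import Mathlib

section Aux

variable {F : Type*} [Ring F] [Algebra ℂ F] (D : F →ₗ[ℂ] F)

/-- `x` is a "signed-Leibniz" element with sign `s`. -/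
def IsGood (s : ℂ) (x : F) : Prop := ∀ y : F, D (x * y) = D x * y + s • (x * D y)

namespace IsGood

variable {D}

lemma zero (s : ℂ) : IsGood D s (0 : F) := by
  intro y; simp

lemma add {s : ℂ} {x x' : F} (hx : IsGood D s x) (hx' : IsGood D s x') :
    IsGood D s (x + x') := by
  intro y
  simp only [add_mul, map_add, hx y, hx' y, smul_add]
  abel

lemma smul {s : ℂ} {x : F} (c : ℂ) (hx : IsGood D s x) : IsGood D s (c • x) := by
  intro y
  rw [smul_mul_assoc, map_smul, hx y, map_smul, smul_add, smul_mul_assoc,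
    smul_comm c s, smul_mul_assoc]

lemma sum {s : ℂ} {ι : Type*} {t : Finset ι} {f : ι → F}
    (h : ∀ i ∈ t, IsGood D s (f i)) : IsGood D s (∑ i ∈ t, f i) := by
  classical
  induction t using Finset.induction_on with
  | empty => simpa using IsGood.zero (D := D) s
  | insert a t' hnot ih =>
    rw [Finset.sum_insert hnot]
    exact (h a (Finset.mem_insert_self a t')).add
      (ih fun i hi => h i (Finset.mem_insert_of_mem hi))

lemma mul {s s' : ℂ} {x y : F} (hx : IsGood D s x) (hy : IsGood D s' y) :
    IsGood D (s * s') (x * y) := by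
  intro z
  calc D (x * y * z) = D (x * (y * z)) := by rw [mul_assoc]
    _ = D x * (y * z) + s • (x * D (y * z)) := hx _
    _ = D x * (y * z) + s • (x * (D y * z + s' • (y * D z))) := by rw [hy z]
    _ = D (x * y) * z + (s * s') • (x * y * D z) := by
        rw [hx y]
        simp only [mul_add, smul_add, add_mul, smul_mul_assoc, mul_smul_comm,
          mul_assoc, smul_smul]
        abel

end IsGood

end Aux

/-- Let `f` be the (exterior) algebra generated by degree-one elements: the
`(1,0)`-vectors `T_j`, the central vector `W` spanning `c^{1,0}`, the `(0,1)`-forms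
`ω̄^k` and the central `(0,1)`-form `ρ̄`.  Let `D = ∂̄` be the anti-derivation with
`D W = 0`, `D T_j = Σ_k E_{kj} ω̄^k ∧ W`, and `D = 0` on the `(0,1)`-forms.
Then `D ∘ D = 0` on all of `f`, i.e. on the subalgebra generated by the generators;
in particular `D² Ξ = 0` for every polyvector `Ξ`. -/
theorem stmt7 {F : Type*} [Ring F] [Algebra ℂ F] {n : ℕ}
    (T : Fin n → F) (W : F) (ω : Fin n → F) (ρ : F)
    (E : Fin n → Fin n → ℂ)
    (D : F →ₗ[ℂ] F)
    (gens : Set F)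
    (hgens : gens = Set.range T ∪ Set.range ω ∪ {W, ρ})
    -- degree-one generators anticommute
    (hanti : ∀ g ∈ gens, ∀ g' ∈ gens, g * g' = -(g' * g))
    -- `D` is an anti-derivation with respect to the degree-one generators
    (hder : ∀ g ∈ gens, ∀ y : F, D (g * y) = D g * y - g * D y)
    (hD1 : D 1 = 0)
    (hDW : D W = 0)
    (hDT : ∀ j, D (T j) = ∑ k, E k j • (ω k * W))
    (hDω : ∀ k, D (ω k) = 0)
    (hDρ : D ρ = 0) :
    ∀ x ∈ Algebra.adjoin ℂ gens, D (D x) = 0 := by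
  -- every generator is signed-Leibniz with sign `-1`
  have hgood : ∀ g ∈ gens, IsGood D (-1) g := by
    intro g hg y
    rw [hder g hg y, neg_one_smul, sub_eq_add_neg]
  have hWmem : W ∈ gens := by rw [hgens]; simp
  have hωmem : ∀ k, ω k ∈ gens := by intro k; rw [hgens]; left; right; exact ⟨k, rfl⟩
  have hρmem : ρ ∈ gens := by rw [hgens]; simp
  -- D of a generator is again signed-Leibniz (with sign `1`) and killed by `D`
  have hDgen : ∀ g ∈ gens, IsGood D 1 (D g) ∧ D (D g) = 0 := by
    intro g hg
    rw [hgens] at hg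
    have hωW : ∀ k, IsGood D 1 (ω k * W) := by
      intro k
      have := (hgood _ (hωmem k)).mul (hgood _ hWmem)
      simpa using this
    have hDωW : ∀ k, D (ω k * W) = 0 := by
      intro k
      rw [hder _ (hωmem k), hDω, hDW, zero_mul, mul_zero, sub_zero]
    rcases hg with (⟨j, rfl⟩ | ⟨k, rfl⟩) | hg
    · constructor
      · rw [hDT j]
        exact IsGood.sum fun k _ => (hωW k).smul _
      · rw [hDT j, map_sum]
        refine Finset.sum_eq_zero fun k _ => ?_
        rw [map_smul, hDωW, smul_zero]
    · rw [hDω k]; exact ⟨IsGood.zero 1, by simp⟩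
    · rcases hg with rfl | rfl
      · rw [hDW]; exact ⟨IsGood.zero 1, by simp⟩
      · rw [hDρ]; exact ⟨IsGood.zero 1, by simp⟩
  -- monomials: the key property, closed under multiplication
  have hmono : ∀ m ∈ Submonoid.closure gens,
      ∃ s : ℂ, IsGood D s m ∧ IsGood D (-s) (D m) ∧ D (D m) = 0 := by
    intro m hm
    induction hm using Submonoid.closure_induction with
    | mem g hg =>
      refine ⟨-1, hgood g hg, ?_, (hDgen g hg).2⟩
      rw [neg_neg]; exact (hDgen g hg).1
    | one =>
      refine ⟨1, ?_, ?_, by rw [hD1, map_zero]⟩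
      · intro y; rw [one_mul, hD1, zero_mul, one_smul, one_mul, zero_add]
      · rw [hD1]; exact IsGood.zero _
    | mul x y hx hy ihx ihy =>
      obtain ⟨s, hxg, hxDg, hxDD⟩ := ihx
      obtain ⟨s', hyg, hyDg, hyDD⟩ := ihy
      refine ⟨s * s', hxg.mul hyg, ?_, ?_⟩
      · have h1 : D (x * y) = D x * y + s • (x * D y) := hxg y
        rw [h1]
        have hA : IsGood D (-(s * s')) (D x * y) := by
          simpa [neg_mul] using hxDg.mul hyg
        have hB : IsGood D (-(s * s')) (s • (x * D y)) := by
          simpa [mul_neg] using (hxg.mul hyDg).smul s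
        exact hA.add hB
      · have h1 : D (x * y) = D x * y + s • (x * D y) := hxg y
        rw [h1, map_add, map_smul, hxDg y, hxg (D y), hxDD, hyDD]
        simp [smul_smul, mul_comm]
  -- conclude on the whole adjoin via span of the monoid closure
  intro x hx
  have hx' : x ∈ Submodule.span ℂ ((Submonoid.closure gens : Submonoid F) : Set F) := by
    rw [← Algebra.adjoin_eq_span]
    exact hx
  clear hx
  induction hx' using Submodule.span_induction with
  | mem m hm => obtain ⟨s, _, _, h⟩ := hmono m hm; exact h
  | zero => simp
  | add a b _ _ ha hb => rw [map_add, map_add, ha, hb, add_zero]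
  | smul c a _ ha => rw [map_smul, map_smul, ha, smul_zero]
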